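/- Let (X,d) be a complete metric space and T : X → X be a (φ,F)-contraction such that F : (0,∞) → ℝ is continuous at the right at every point, φ : (0,∞) → (0,∞) satisfies condition (iii'), and T is contractive. Then T is a Picard operator. -/

import Mathlib

open Filter Topology

/-- `T` is a Picard operator: it has a unique fixed point `u` and every
sequence of iterates converges to `u`. -/
def IsPicardOperator {X : Type*} [MetricSpace X] (T : X → X) : Prop :=
  ∃ u : X, T u = u ∧ (∀ v : X, T v = v → v = u) ∧
    ∀ x : X, Tendsto (fun n => T^[n] x) atTop (𝓝 u)

/-- `T` is contractive: `d(Tx,Ty) < d(x,y)` whenever `x ≠ y`. -/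
def Contractive {X : Type*} [MetricSpace X] (T : X → X) : Prop :=
  ∀ x y : X, x ≠ y → dist (T x) (T y) < dist x y

/-- The Matkowski–Węgrzyk condition. -/
def MWCondition {X : Type*} [MetricSpace X] (T : X → X) : Prop :=
  ∀ ε > (0 : ℝ), ∃ δ > (0 : ℝ), ∀ x y : X,
    ε < dist x y → dist x y < ε + δ → dist (T x) (T y) ≤ ε

/-- `T` is a CJMP-contraction. -/
def IsCJMP {X : Type*} [MetricSpace X] (T : X → X) : Prop :=
  Contractive T ∧ MWCondition T

lemma contractive_dist_le {X : Type*} [MetricSpace X] {T : X → X}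
    (hT : Contractive T) (x y : X) : dist (T x) (T y) ≤ dist x y := by
  rcases eq_or_ne x y with rfl | h
  · simp
  · exact (hT x y h).le

/-- A contractive map satisfying the MW condition: every orbit converges to a fixed point. -/
lemma orbit_tendsto {X : Type*} [MetricSpace X] [CompleteSpace X] {T : X → X}
    (hT : Contractive T) (hMW : MWCondition T) (x : X) :
    ∃ u : X, T u = u ∧ Tendsto (fun n => T^[n] x) atTop (𝓝 u) := by
  set s : ℕ → X := fun n => T^[n] x with hs
  have hstep : ∀ n, s (n + 1) = T (s n) := by
    intro n; simp [hs, Function.iterate_succ_apply']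
  set d : ℕ → ℝ := fun n => dist (s n) (s (n + 1)) with hd
  have hanti : ∀ n, d (n + 1) ≤ d n := by
    intro n
    have := contractive_dist_le hT (s n) (s (n + 1))
    simpa [hd, hstep] using this
  have hmono : Antitone d := antitone_nat_of_succ_le hanti
  have hbdd : BddBelow (Set.range d) := ⟨0, by rintro _ ⟨n, rfl⟩; exact dist_nonneg⟩
  set r : ℝ := ⨅ n, d n with hr
  have hdlim : Tendsto d atTop (𝓝 r) := tendsto_atTop_ciInf hmono hbdd
  have hrle : ∀ n, r ≤ d n := fun n => ciInf_le hbdd n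
  have hr0 : 0 ≤ r := le_ciInf fun n => dist_nonneg
  -- r = 0
  have hrzero : r = 0 := by
    by_contra hne
    have hrpos : 0 < r := lt_of_le_of_ne hr0 (Ne.symm hne)
    obtain ⟨δ, hδ, hmw⟩ := hMW r hrpos
    obtain ⟨n, hn⟩ : ∃ n, d n < r + δ := by
      have := hdlim.eventually (eventually_lt_nhds (by linarith : r < r + δ))
      exact this.exists
    have hne1 : s n ≠ s (n + 1) := by
      intro h
      have : d n = 0 := by simp [hd, h]
      linarith [hrle n]
    have hne2 : s (n + 1) ≠ s (n + 2) := by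
      intro h
      have : d (n + 1) = 0 := by simp [hd, h]
      linarith [hrle (n + 1)]
    have hlt1 : r < d n := lt_of_le_of_lt (hrle (n + 1)) (by
      have := hT (s n) (s (n + 1)) hne1
      simpa [hd, hstep] using this)
    have hle : dist (T (s n)) (T (s (n + 1))) ≤ r := hmw _ _ hlt1 hn
    have hd1 : d (n + 1) ≤ r := by simpa [hd, hstep] using hle
    have hlt2 : r < d (n + 1) := lt_of_le_of_lt (hrle (n + 2)) (by
      have := hT (s (n + 1)) (s (n + 2)) hne2
      simpa [hd, hstep] using this)
    linarith
  have hd0 : Tendsto d atTop (𝓝 0) := hrzero ▸ hdlim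
  -- Cauchy
  have hc : CauchySeq s := by
    rw [Metric.cauchySeq_iff]
    intro ε hε
    have hε2 : (0 : ℝ) < ε / 2 := by linarith
    obtain ⟨δ, hδ, hmw⟩ := hMW (ε / 2) hε2
    set δ' : ℝ := min δ (ε / 2) with hδ'
    have hδ'pos : 0 < δ' := lt_min hδ hε2
    obtain ⟨N, hN⟩ : ∃ N, ∀ n ≥ N, d n < δ' := by
      have := hd0.eventually (eventually_lt_nhds hδ'pos)
      simpa [eventually_atTop] using this
    refine ⟨N, fun m hm n hn => ?_⟩
    -- key claim: for p ≥ N and all k, dist (s p) (s (p+k)) < ε/2 + δ'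
    have key : ∀ p ≥ N, ∀ k, dist (s p) (s (p + k)) < ε / 2 + δ' := by
      intro p hp k
      induction k with
      | zero => simpa using by linarith
      | succ k ih =>
        have hTstep : dist (s (p + 1)) (s (p + k + 1)) ≤ ε / 2 := by
          rcases le_or_gt (dist (s p) (s (p + k))) (ε / 2) with hle | hlt
          · calc dist (s (p + 1)) (s (p + k + 1))
                = dist (T (s p)) (T (s (p + k))) := by rw [hstep, hstep]
              _ ≤ dist (s p) (s (p + k)) := contractive_dist_le hT _ _
              _ ≤ ε / 2 := hle
          · have hlt2 : dist (s p) (s (p + k)) < ε / 2 + δ :=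
              lt_of_lt_of_le ih (by have := min_le_left δ (ε / 2); linarith)
            have := hmw (s p) (s (p + k)) hlt hlt2
            calc dist (s (p + 1)) (s (p + k + 1))
                = dist (T (s p)) (T (s (p + k))) := by rw [hstep, hstep]
              _ ≤ ε / 2 := this
        calc dist (s p) (s (p + (k + 1)))
            ≤ dist (s p) (s (p + 1)) + dist (s (p + 1)) (s (p + (k + 1))) :=
              dist_triangle _ _ _
          _ = dist (s p) (s (p + 1)) + dist (s (p + 1)) (s (p + k + 1)) := by
              ring_nf
          _ < δ' + ε / 2 := by
              have := hN p hp
              have h2 := hTstep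
              simp only [hd] at this
              linarith
          _ = ε / 2 + δ' := by ring
    have hδ'le : δ' ≤ ε / 2 := min_le_right _ _
    rcases le_total n m with h | h
    · obtain ⟨k, rfl⟩ := Nat.exists_eq_add_of_le h
      have := key n hn k
      rw [dist_comm]
      linarith
    · obtain ⟨k, rfl⟩ := Nat.exists_eq_add_of_le h
      have := key m hm k
      linarith
  obtain ⟨u, hu⟩ := cauchySeq_tendsto_of_complete hc
  have hLip : LipschitzWith 1 T := by
    apply LipschitzWith.of_dist_le_mul
    intro a b
    simpa using contractive_dist_le hT a b
  have hTu : Tendsto (fun n => T (s n)) atTop (𝓝 (T u)) :=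
    (hLip.continuous.tendsto u).comp hu
  have hTu' : Tendsto (fun n => T (s n)) atTop (𝓝 u) := by
    have : (fun n => T (s n)) = fun n => s (n + 1) := by
      funext n; rw [hstep]
    rw [this]
    exact hu.comp (tendsto_add_atTop_nat 1)
  exact ⟨u, tendsto_nhds_unique hTu hTu', hu⟩

lemma picard_of_cjmp {X : Type*} [MetricSpace X] [CompleteSpace X] [Nonempty X] {T : X → X}
    (hT : Contractive T) (hMW : MWCondition T) : IsPicardOperator T := by
  obtain ⟨u, hu, _⟩ := orbit_tendsto hT hMW (Classical.arbitrary X)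
  have huniq : ∀ v : X, T v = v → v = u := by
    intro v hv
    by_contra hne
    have := hT v u hne
    rw [hv, hu] at this
    exact lt_irrefl _ this
  refine ⟨u, hu, huniq, fun x => ?_⟩
  obtain ⟨w, hw, hwt⟩ := orbit_tendsto hT hMW x
  rwa [huniq w hw] at hwt

theorem stmt_12 {X : Type*} [MetricSpace X] [CompleteSpace X] [Nonempty X] (T : X → X)
    (hT : Contractive T) (F φ : ℝ → ℝ) (hφpos : ∀ t > (0 : ℝ), 0 < φ t)
    (hF : ∀ t > (0 : ℝ), Tendsto F (𝓝[>] t) (𝓝 (F t)))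
    (hiii : ∀ t > (0 : ℝ), ∀ tn : ℕ → ℝ, (∀ n, t < tn n) → Tendsto tn atTop (𝓝 t) →
      0 < limsup (fun n => φ (tn n)) atTop)
    (hcontr : ∀ x y : X, T x ≠ T y →
      φ (dist x y) + F (dist (T x) (T y)) ≤ F (dist x y)) :
    IsPicardOperator T := by
  apply picard_of_cjmp hT
  -- prove the MW condition
  intro ε hε
  by_contra hcon
  push_neg at hcon
  -- build sequences
  have hch : ∀ n : ℕ, ∃ x y : X, ε < dist x y ∧ dist x y < ε + 1 / (n + 1) ∧
      ε < dist (T x) (T y) := by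
    intro n
    have hpos : (0 : ℝ) < 1 / (n + 1) := by positivity
    obtain ⟨x, y, h1, h2, h3⟩ := hcon (1 / (n + 1)) hpos
    exact ⟨x, y, h1, h2, h3⟩
  choose x y h1 h2 h3 using hch
  set tn : ℕ → ℝ := fun n => dist (x n) (y n) with htn
  set sn : ℕ → ℝ := fun n => dist (T (x n)) (T (y n)) with hsn
  have hxy : ∀ n, x n ≠ y n := by
    intro n h
    have := h1 n
    rw [h] at this
    simp at this
    linarith
  have hsnlt : ∀ n, sn n < tn n := fun n => hT _ _ (hxy n)
  have hTxy : ∀ n, T (x n) ≠ T (y n) := by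
    intro n h
    have := h3 n
    rw [h] at this
    simp at this
    linarith
  have hone : Tendsto (fun n : ℕ => ε + 1 / ((n : ℝ) + 1)) atTop (𝓝 ε) := by
    have := (tendsto_one_div_add_atTop_nhds_zero_nat :
      Tendsto (fun n : ℕ => 1 / ((n : ℝ) + 1)) atTop (𝓝 0))
    have h := this.const_add ε
    simpa using h
  have htlim : Tendsto tn atTop (𝓝 ε) :=
    tendsto_of_tendsto_of_tendsto_of_le_of_le tendsto_const_nhds hone
      (fun n => (h1 n).le) (fun n => (h2 n).le)
  have hslim : Tendsto sn atTop (𝓝 ε) :=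
    tendsto_of_tendsto_of_tendsto_of_le_of_le tendsto_const_nhds htlim
      (fun n => (h3 n).le) (fun n => (hsnlt n).le)
  have htlim' : Tendsto tn atTop (𝓝[>] ε) :=
    tendsto_nhdsWithin_of_tendsto_nhds_of_eventually_within _ htlim
      (Eventually.of_forall fun n => h1 n)
  have hslim' : Tendsto sn atTop (𝓝[>] ε) :=
    tendsto_nhdsWithin_of_tendsto_nhds_of_eventually_within _ hslim
      (Eventually.of_forall fun n => h3 n)
  have hFt : Tendsto (fun n => F (tn n)) atTop (𝓝 (F ε)) := (hF ε hε).comp htlim'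
  have hFs : Tendsto (fun n => F (sn n)) atTop (𝓝 (F ε)) := (hF ε hε).comp hslim'
  have hφle : ∀ n, φ (tn n) ≤ F (tn n) - F (sn n) := by
    intro n
    have := hcontr (x n) (y n) (hTxy n)
    simp only [htn, hsn]
    linarith
  have hdiff : Tendsto (fun n => F (tn n) - F (sn n)) atTop (𝓝 0) := by
    have := hFt.sub hFs
    simpa using this
  have hφlim : Tendsto (fun n => φ (tn n)) atTop (𝓝 0) :=
    tendsto_of_tendsto_of_tendsto_of_le_of_le tendsto_const_nhds hdiff
      (fun n => (hφpos (tn n) (lt_trans hε (h1 n))).le) hφle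
  have hls : limsup (fun n => φ (tn n)) atTop = 0 := hφlim.limsup_eq
  have := hiii ε hε tn h1 htlim
  rw [hls] at this
  exact lt_irrefl _ this
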